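/- arXiv:1401.5142 — 3 statements merged into one kernel-verified Lean document; each statement's English description precedes it below -/
import Mathlib

section
/- A nilpotent group G whose abelianization is p-radicable is itself p-radicable. -/
/-- A group is `p`-radicable if every element has a `p`-th root. -/
def IsPRadicable (G : Type*) [Group G] (p : ℕ) : Prop :=
  ∀ g : G, ∃ h : G, h ^ p = g

open scoped commutatorElement

private theorem lcs_succ' {G : Type*} [Group G] (n : ℕ) :
    (⊤ : Subgroup G).lowerCentralSeries (n+1) = ⁅(⊤ : Subgroup G).lowerCentralSeries n, (⊤ : Subgroup G)⁆ := by
  rw [Subgroup.lowerCentralSeries_succ]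

private theorem lcs_le_map {G H : Type*} [Group G] [Group H] (f : G →* H)
    (hf : Function.Surjective f) (n : ℕ) :
    (⊤ : Subgroup H).lowerCentralSeries n ≤ Subgroup.map f ((⊤ : Subgroup G).lowerCentralSeries n) := by
  induction n with
  | zero => simp [Subgroup.map_top_of_surjective f hf]
  | succ d ih =>
      rw [lcs_succ', lcs_succ', Subgroup.map_commutator]
      exact Subgroup.commutator_mono ih (by simp [Subgroup.map_top_of_surjective f hf])

private theorem comm_ident {G : Type*} [Group G] (a u v : G) :
    ⁅a, u * v⁆ = ⁅a, u⁆ * (u * ⁅a, v⁆ * u⁻¹) := by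
  simp only [commutatorElement_def]
  group

private theorem comm_pow {G : Type*} [Group G] (a u : G)
    (hcent : ∀ k : ℕ, ∀ w : G, ⁅a, u ^ k⁆ * w = w * ⁅a, u ^ k⁆) (k : ℕ) :
    ⁅a, u ^ k⁆ = ⁅a, u⁆ ^ k := by
  induction k with
  | zero => simp
  | succ m ih =>
      have h1 : ⁅a, u ^ (m+1)⁆ = ⁅a, u ^ m⁆ * (u ^ m * ⁅a, u⁆ * (u ^ m)⁻¹) := by
        rw [pow_succ, comm_ident]
      have h2 : u ^ m * ⁅a, u⁆ * (u ^ m)⁻¹ = ⁅a, u⁆ := by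
        have h3 := hcent 1 (u ^ m)
        rw [pow_one] at h3
        rw [← h3, mul_assoc, mul_inv_cancel, mul_one]
      rw [h1, h2, ih, pow_succ]

private theorem radAux (p : ℕ) (hp : 0 < p) :
    ∀ (n : ℕ) (G : Type*) [Group G], (⊤ : Subgroup G).lowerCentralSeries n = ⊥ →
      IsPRadicable (Abelianization G) p → IsPRadicable G p := by
  intro n
  induction n with
  | zero =>
      intro G _ hbot _ g
      have : g ∈ (⊤ : Subgroup G).lowerCentralSeries 0 := by simp
      rw [hbot, Subgroup.mem_bot] at this
      exact ⟨1, by simp [this]⟩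
  | succ n ih =>
      intro G _ hbot hab g
      set N : Subgroup G := (⊤ : Subgroup G).lowerCentralSeries n with hN
      have hNcent : ∀ z ∈ N, ∀ w : G, z * w = w * z := by
        intro z hz w
        have h1 : ⁅z, w⁆ ∈ ⁅N, (⊤ : Subgroup G)⁆ :=
          Subgroup.commutator_mem_commutator hz (Subgroup.mem_top w)
        rw [← lcs_succ', hbot, Subgroup.mem_bot] at h1
        exact commutatorElement_eq_one_iff_mul_comm.mp h1
      let Q := G ⧸ N
      let π : G →* Q := QuotientGroup.mk' N
      have hπ : Function.Surjective π := QuotientGroup.mk_surjective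
      have hQbot : (⊤ : Subgroup Q).lowerCentralSeries n = ⊥ := by
        have h1 := lcs_le_map π hπ n
        have h2 : Subgroup.map π ((⊤ : Subgroup G).lowerCentralSeries n) = ⊥ := by
          rw [Subgroup.map_eq_bot_iff, QuotientGroup.ker_mk']
        rw [h2] at h1
        exact le_bot_iff.mp h1
      have hQab : IsPRadicable (Abelianization Q) p := by
        intro y
        obtain ⟨q, rfl⟩ : ∃ q : Q, Abelianization.of q = y := QuotientGroup.mk_surjective y
        obtain ⟨g0, rfl⟩ := hπ q
        obtain ⟨a, ha⟩ := hab (Abelianization.of g0)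
        obtain ⟨a', rfl⟩ : ∃ x : G, Abelianization.of x = a := QuotientGroup.mk_surjective a
        refine ⟨Abelianization.of (π a'), ?_⟩
        have h1 : Abelianization.map π ((Abelianization.of a') ^ p) =
            Abelianization.map π (Abelianization.of g0) := by rw [ha]
        simpa [Abelianization.map_of] using h1
      have hQrad : IsPRadicable Q p := ih Q hQbot hQab
      have hdec : ∀ b : G, ∃ x : G, ∃ z ∈ N, b = x ^ p * z := by
        intro b
        obtain ⟨y, hy⟩ := hQrad (π b)
        obtain ⟨x, rfl⟩ := hπ y
        refine ⟨x, (x ^ p)⁻¹ * b, ?_, by group⟩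
        have h1 : π ((x ^ p)⁻¹ * b) = 1 := by
          simp only [map_mul, map_inv, map_pow, hy, inv_mul_cancel]
        rwa [← MonoidHom.mem_ker, QuotientGroup.ker_mk'] at h1
      have hroot : ∀ z ∈ N, ∃ w ∈ N, w ^ p = z := by
        cases n with
        | zero =>
            intro z _
            have hcbot : commutator G = ⊥ := by
              rw [← Subgroup.top_lowerCentralSeries_one]; exact hbot
            obtain ⟨a, ha⟩ := hab (Abelianization.of z)
            obtain ⟨a', rfl⟩ : ∃ x : G, Abelianization.of x = a := QuotientGroup.mk_surjective a
            have ha' : Abelianization.of (a' ^ p) = Abelianization.of z := by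
              rw [map_pow]; exact ha
            have hmem := QuotientGroup.eq.mp ha'
            rw [hcbot, Subgroup.mem_bot, inv_mul_eq_one] at hmem
            exact ⟨a', by simp [hN], hmem⟩
        | succ m =>
            let K : Subgroup G :=
              { carrier := {x | ∃ w ∈ N, w ^ p = x}
                one_mem' := ⟨1, N.one_mem, one_pow p⟩
                mul_mem' := by
                  rintro x y ⟨w1, hw1, rfl⟩ ⟨w2, hw2, rfl⟩
                  exact ⟨w1 * w2, N.mul_mem hw1 hw2,
                    Commute.mul_pow (hNcent w1 hw1 w2) p⟩
                inv_mem' := by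
                  rintro x ⟨w, hw, rfl⟩
                  exact ⟨w⁻¹, N.inv_mem hw, by rw [inv_pow]⟩ }
            have hNK : N ≤ K := by
              rw [hN, lcs_succ', Subgroup.commutator_le]
              intro a ha b _
              obtain ⟨u, c, hc, hb⟩ := hdec b
              subst hb
              have hacomm : ∀ v : G, ⁅a, v⁆ ∈ N := fun v => by
                rw [hN, lcs_succ']
                exact Subgroup.commutator_mem_commutator ha (Subgroup.mem_top v)
              have hac : ⁅a, c⁆ = 1 :=
                commutatorElement_eq_one_iff_mul_comm.mpr ((hNcent c hc a).symm)
              have h1 : ⁅a, u ^ p * c⁆ = ⁅a, u ^ p⁆ := by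
                rw [comm_ident a (u ^ p) c, hac]
                simp
              have h2 : ⁅a, u ^ p⁆ = ⁅a, u⁆ ^ p :=
                comm_pow a u (fun k w => hNcent _ (hacomm (u ^ k)) w) p
              exact ⟨⁅a, u⁆, hacomm u, by rw [← h2, ← h1]⟩
            intro z hz
            exact hNK hz
      obtain ⟨x, z, hz, hgx⟩ := hdec g
      obtain ⟨w, hw, hwp⟩ := hroot z hz
      refine ⟨x * w, ?_⟩
      rw [Commute.mul_pow ((hNcent w hw x).symm) p, hwp]
      exact hgx.symm

/-- A nilpotent group whose abelianization is `p`-radicable is itself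
`p`-radicable. -/
theorem stmt3 (G : Type*) [Group G] [Group.IsNilpotent G] (p : ℕ) (hp : p.Prime)
    (h : IsPRadicable (Abelianization G) p) : IsPRadicable G p := by
  obtain ⟨n, hn⟩ := nilpotent_iff_lowerCentralSeries.mp ‹_›
  exact radAux p hp.pos n G hn h
end

section
/- Let Γ be a nilpotent group of finite Hirsch rank such that some finite-index subgroup has p-radicable abelianization. Then every homomorphism from that finite-index subgroup into the maximal compact subgroup E of a ℚ_p-torus C(ℚ_p) has finite image. -/
open Matrix

/-- `G` admits a subnormal series of length `n` with infinite cyclic factors. -/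
def IsPolyZ (G : Type*) [Group G] (n : ℕ) : Prop :=
  ∃ c : Fin (n + 1) → Subgroup G, Monotone c ∧ c 0 = ⊥ ∧ c (Fin.last n) = ⊤ ∧
    ∀ i : Fin n, ∃ f : (c i.succ) →* Multiplicative ℤ,
      Function.Surjective f ∧ f.ker = (c i.castSucc).subgroupOf (c i.succ)

/-- The Hirsch rank of a group. -/
noncomputable def hirschRank (G : Type*) [Group G] : ℕ∞ :=
  ⨆ (H : Subgroup G) (_ : H.FG), sSup {m : ℕ∞ | ∃ l : ℕ, m = l ∧ IsPolyZ H l}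

/-- Extension of scalars from `GL n ℚ_p` to the algebraic closure of `ℚ_p`. -/
noncomputable def glMapAC (p : ℕ) [Fact p.Prime] {n : ℕ} :
    GL (Fin n) ℚ_[p] →* GL (Fin n) (AlgebraicClosure ℚ_[p]) :=
  Units.map (RingHom.toMonoidHom
    (RingHom.mapMatrix (algebraMap ℚ_[p] (AlgebraicClosure ℚ_[p]))))


section AuxStmt17
open Finset

variable {p : ℕ} [Fact p.Prime] {n : ℕ}

local notation "R" => Matrix (Fin n) (Fin n) ℚ_[p]

noncomputable def nm (A : Matrix (Fin n) (Fin n) ℚ_[p]) : NNReal :=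
  Finset.univ.sup fun ij : Fin n × Fin n => ‖A ij.1 ij.2‖₊

theorem nm_le_iff {A : Matrix (Fin n) (Fin n) ℚ_[p]} {r : NNReal} :
    nm A ≤ r ↔ ∀ i j, ‖A i j‖₊ ≤ r := by
  constructor
  · intro h i j
    exact le_trans (Finset.le_sup (f := fun ij : Fin n × Fin n => ‖A ij.1 ij.2‖₊)
      (Finset.mem_univ (i, j))) h
  · intro h
    exact Finset.sup_le fun ij _ => h ij.1 ij.2

theorem nm_eq_zero_iff {A : Matrix (Fin n) (Fin n) ℚ_[p]} : nm A = 0 ↔ A = 0 := by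
  constructor
  · intro h
    ext i j
    have := (nm_le_iff.mp h.le) i j
    simpa using this
  · rintro rfl
    exact le_antisymm (nm_le_iff.mpr (fun i j => by simp)) bot_le

theorem padic_nnnorm_add (a b : ℚ_[p]) : ‖a + b‖₊ ≤ ‖a‖₊ ⊔ ‖b‖₊ := by
  rw [← NNReal.coe_le_coe]
  push_cast
  exact le_trans (Padic.nonarchimedean a b) (by simp [le_max_iff, NNReal.coe_max])

theorem padic_nnnorm_sum_le {ι : Type*} (s : Finset ι) (f : ι → ℚ_[p]) (C : NNReal)
    (h : ∀ i ∈ s, ‖f i‖₊ ≤ C) : ‖∑ i ∈ s, f i‖₊ ≤ C := by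
  induction s using Finset.cons_induction with
  | empty => simp
  | cons a s ha ih =>
    rw [Finset.sum_cons]
    refine le_trans (padic_nnnorm_add _ _) (sup_le ?_ ?_)
    · exact h a (Finset.mem_cons_self a s)
    · exact ih fun i hi => h i (Finset.mem_cons_of_mem hi)

theorem nm_add_le (A B : Matrix (Fin n) (Fin n) ℚ_[p]) : nm (A + B) ≤ nm A ⊔ nm B := by
  refine nm_le_iff.mpr fun i j => ?_
  refine le_trans (by exact padic_nnnorm_add (A i j) (B i j)) ?_
  exact sup_le_sup (nm_le_iff.mp le_rfl i j) (nm_le_iff.mp le_rfl i j)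

theorem nm_neg (A : Matrix (Fin n) (Fin n) ℚ_[p]) : nm (-A) = nm A := by
  unfold nm; congr 1; ext ij; simp

theorem nm_mul_le (A B : Matrix (Fin n) (Fin n) ℚ_[p]) : nm (A * B) ≤ nm A * nm B := by
  refine nm_le_iff.mpr fun i j => ?_
  rw [Matrix.mul_apply]
  refine padic_nnnorm_sum_le _ _ _ fun k _ => ?_
  rw [nnnorm_mul]
  exact mul_le_mul' (nm_le_iff.mp le_rfl i k) (nm_le_iff.mp le_rfl k j)

theorem nm_smul_le (c : ℚ_[p]) (A : Matrix (Fin n) (Fin n) ℚ_[p]) :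
    nm (c • A) ≤ ‖c‖₊ * nm A := by
  refine nm_le_iff.mpr fun i j => ?_
  rw [Matrix.smul_apply, smul_eq_mul, nnnorm_mul]
  exact mul_le_mul' le_rfl (nm_le_iff.mp le_rfl i j)

theorem nm_exists {A : Matrix (Fin n) (Fin n) ℚ_[p]} (h : nm A ≠ 0) :
    ∃ i j, ‖A i j‖₊ = nm A := by
  have hne : (Finset.univ : Finset (Fin n × Fin n)).Nonempty := by
    by_contra hc
    rw [Finset.not_nonempty_iff_eq_empty] at hc
    exact h (by unfold nm; rw [hc]; simp)
  obtain ⟨ij, -, hij⟩ := Finset.exists_mem_eq_sup Finset.univ hne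
    (fun ij : Fin n × Fin n => ‖A ij.1 ij.2‖₊)
  exact ⟨ij.1, ij.2, hij.symm⟩

theorem nm_smul (c : ℚ_[p]) (A : Matrix (Fin n) (Fin n) ℚ_[p]) :
    nm (c • A) = ‖c‖₊ * nm A := by
  rcases eq_or_ne (nm A) 0 with h | h
  · rw [nm_eq_zero_iff.mp h]; simp [nm_eq_zero_iff.mpr rfl]
  · refine le_antisymm (nm_smul_le c A) ?_
    obtain ⟨i, j, hij⟩ := nm_exists h
    calc ‖c‖₊ * nm A = ‖(c • A) i j‖₊ := by
          rw [← hij, Matrix.smul_apply, smul_eq_mul, nnnorm_mul]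
      _ ≤ nm (c • A) := nm_le_iff.mp le_rfl i j

theorem nm_add_eq_left {A B : Matrix (Fin n) (Fin n) ℚ_[p]} (h : nm B < nm A) :
    nm (A + B) = nm A := by
  refine le_antisymm (le_trans (nm_add_le A B) (sup_le le_rfl h.le)) ?_
  by_contra hc
  push_neg at hc
  have : nm A ≤ nm (A + B) ⊔ nm B := by
    have := nm_add_le (A + B) (-B)
    simpa [nm_neg] using this
  rcases le_sup_iff.mp this with h1 | h1
  · exact absurd h1 (not_le.mpr hc)
  · exact absurd h1 (not_le.mpr h)

theorem nm_sum_le {ι : Type*} (s : Finset ι) (f : ι → Matrix (Fin n) (Fin n) ℚ_[p]) (C : NNReal)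
    (h : ∀ i ∈ s, nm (f i) ≤ C) : nm (∑ i ∈ s, f i) ≤ C := by
  refine nm_le_iff.mpr fun i j => ?_
  rw [Matrix.sum_apply]
  exact padic_nnnorm_sum_le _ _ _ fun k hk => nm_le_iff.mp (h k hk) i j

theorem nm_pow_le (A : Matrix (Fin n) (Fin n) ℚ_[p]) {r : NNReal} (h : nm A ≤ r) (m : ℕ)
    (hm : 1 ≤ m) : nm (A ^ m) ≤ nm A * r ^ (m - 1) := by
  induction m with
  | zero => omega
  | succ k ih =>
    rcases Nat.eq_or_lt_of_le hm with h1 | h1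
    · simp [← h1]
    · have hk : 1 ≤ k := by omega
      have := ih hk
      calc nm (A ^ (k + 1)) = nm (A ^ k * A) := by rw [pow_succ]
        _ ≤ nm (A ^ k) * nm A := nm_mul_le _ _
        _ ≤ (nm A * r ^ (k - 1)) * r := mul_le_mul' this h
        _ = nm A * r ^ k := by
            rw [mul_assoc, ← pow_succ]
            congr 2
            omega
        _ = nm A * r ^ (k + 1 - 1) := by simp

noncomputable def qq (p : ℕ) : NNReal := (p : NNReal)⁻¹

theorem qq_pos : 0 < qq p := by
  have := (Fact.out : p.Prime).pos
  unfold qq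
  positivity

theorem qq_lt_one : qq p < 1 := by
  have h1 := (Fact.out : p.Prime).one_lt
  rw [qq, inv_lt_one_iff₀]
  right
  exact_mod_cast h1

theorem nnnorm_p_cast : ‖(p : ℚ_[p])‖₊ = qq p := by
  ext
  rw [coe_nnnorm, Padic.norm_p]
  simp [qq]

theorem nnnorm_nat_le_one (c : ℕ) : ‖(c : ℚ_[p])‖₊ ≤ 1 := by
  rw [← NNReal.coe_le_coe, coe_nnnorm]
  exact_mod_cast Padic.norm_int_le_one (c : ℤ)

theorem nnnorm_nat_le_qq {c : ℕ} (hc : p ∣ c) : ‖(c : ℚ_[p])‖₊ ≤ qq p := by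
  rw [← NNReal.coe_le_coe, coe_nnnorm]
  have := (Padic.norm_int_le_pow_iff_dvd (c : ℤ) 1).mpr (by exact_mod_cast pow_one p ▸ hc)
  refine le_trans (by exact_mod_cast this) ?_
  simp [qq]

theorem nnnorm_nat_eq_one {c : ℕ} (hc : ¬ p ∣ c) : ‖(c : ℚ_[p])‖₊ = 1 := by
  refine le_antisymm (nnnorm_nat_le_one c) ?_
  rw [← NNReal.coe_le_coe, coe_nnnorm]
  by_contra hlt
  push_neg at hlt
  have : ‖((c : ℤ) : ℚ_[p])‖ < 1 := by push_cast; simpa using hlt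
  exact hc (by exact_mod_cast (Padic.norm_intCast_lt_one_iff (k := (c:ℤ))).mp this)

theorem natCast_matrix_smul (c : ℕ) :
    ((c : ℕ) : Matrix (Fin n) (Fin n) ℚ_[p]) = (c : ℚ_[p]) • (1 : Matrix (Fin n) (Fin n) ℚ_[p]) :=
  (map_natCast (algebraMap ℚ_[p] (Matrix (Fin n) (Fin n) ℚ_[p])) c).symm.trans
    (Algebra.algebraMap_eq_smul_one _)

theorem nm_mul_natCast (z : Matrix (Fin n) (Fin n) ℚ_[p]) (c : ℕ) :
    nm (z * (c : Matrix (Fin n) (Fin n) ℚ_[p])) = ‖(c : ℚ_[p])‖₊ * nm z := by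
  rw [natCast_matrix_smul, mul_smul_comm, mul_one, nm_smul]

theorem key_binom (z : Matrix (Fin n) (Fin n) ℚ_[p]) (N k : ℕ) (hN : N = k + 1) :
    (1 + z) ^ N = 1 + (N : ℚ_[p]) • z +
      ∑ i ∈ Finset.range k, z ^ (i + 2) * ((N.choose (i + 2)) : Matrix (Fin n) (Fin n) ℚ_[p]) := by
  subst hN
  rw [add_comm (1 : Matrix (Fin n) (Fin n) ℚ_[p]) z,
    Commute.add_pow (Commute.one_right z) (k+1)]
  rw [Finset.sum_range_succ' _ (k+1), Finset.sum_range_succ' _ k]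
  simp only [one_pow, mul_one, pow_zero, pow_one, one_mul, zero_add, Nat.choose_zero_right, Nat.cast_one,
    Nat.choose_one_right]
  rw [natCast_matrix_smul (k+1), mul_smul_comm, mul_one]
  have h2 : ∀ x : ℕ, x + 1 + 1 = x + 2 := fun x => rfl
  simp only [h2]
  abel

theorem nm_S_le (z : Matrix (Fin n) (Fin n) ℚ_[p]) {r : NNReal} (hr : r ≤ 1) (hz : nm z ≤ r)
    (N k : ℕ) :
    nm (∑ i ∈ Finset.range k, z ^ (i + 2) * ((N.choose (i + 2)) : Matrix (Fin n) (Fin n) ℚ_[p]))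
      ≤ nm z * r := by
  refine nm_sum_le _ _ _ fun i _ => ?_
  rw [nm_mul_natCast]
  calc ‖((N.choose (i+2) : ℕ) : ℚ_[p])‖₊ * nm (z ^ (i + 2))
      ≤ 1 * (nm z * r ^ (i + 1)) :=
        mul_le_mul' (nnnorm_nat_le_one _) (by simpa using nm_pow_le z hz (i+2) (by omega))
    _ ≤ nm z * r := by
        rw [one_mul]
        exact mul_le_mul' le_rfl (pow_le_of_le_one zero_le hr (by omega))

theorem nm_pow_p_le (z : Matrix (Fin n) (Fin n) ℚ_[p]) {j : ℕ} (hj : 2 ≤ j)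
    (hz : nm z ≤ qq p ^ j) : nm ((1 + z) ^ p - 1) ≤ qq p ^ (j + 1) := by
  have hp1 : p = (p - 1) + 1 := (Nat.succ_pred_eq_of_pos (Fact.out : p.Prime).pos).symm
  rw [key_binom z p (p-1) hp1]
  have heq : (1 : Matrix (Fin n) (Fin n) ℚ_[p]) + (p : ℚ_[p]) • z +
      (∑ i ∈ Finset.range (p-1), z ^ (i + 2) * ((p.choose (i + 2)) : Matrix (Fin n) (Fin n) ℚ_[p]))
      - 1 = (p : ℚ_[p]) • z +
      (∑ i ∈ Finset.range (p-1), z ^ (i + 2) * ((p.choose (i + 2)) : Matrix (Fin n) (Fin n) ℚ_[p])) := by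
    abel
  rw [heq]
  refine le_trans (nm_add_le _ _) (sup_le ?_ ?_)
  · rw [nm_smul, nnnorm_p_cast]
    calc qq p * nm z ≤ qq p * qq p ^ j := mul_le_mul' le_rfl hz
      _ = qq p ^ (j + 1) := by rw [← pow_succ']
  · have hr1 : qq p ^ j ≤ 1 := pow_le_one₀ zero_le qq_lt_one.le
    refine le_trans (nm_S_le z hr1 hz p (p-1)) ?_
    calc nm z * qq p ^ j ≤ qq p ^ j * qq p ^ j := mul_le_mul' hz le_rfl
      _ = qq p ^ (j + j) := by rw [← pow_add]
      _ ≤ qq p ^ (j + 1) := pow_le_pow_of_le_one zero_le qq_lt_one.le (by omega)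

theorem nm_pow_p_pow_le (z : Matrix (Fin n) (Fin n) ℚ_[p]) (hz : nm z ≤ qq p ^ 2) (k : ℕ) :
    nm ((1 + z) ^ (p ^ k) - 1) ≤ qq p ^ (k + 2) := by
  induction k with
  | zero => simpa using hz
  | succ k ih =>
    have h1 : (1 + z) ^ (p ^ (k+1)) = (1 + ((1 + z) ^ (p ^ k) - 1)) ^ p := by
      rw [add_sub_cancel, ← pow_mul, pow_succ]
    rw [h1]
    have := nm_pow_p_le ((1 + z) ^ (p ^ k) - 1) (j := k + 2) (by omega) ih
    simpa using this

theorem nm_pow_p_eq (z : Matrix (Fin n) (Fin n) ℚ_[p]) (h0 : nm z ≠ 0)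
    (hz : nm z ≤ qq p ^ 2) : nm ((1 + z) ^ p - 1) = qq p * nm z := by
  have hp1 : p = (p - 1) + 1 := (Nat.succ_pred_eq_of_pos (Fact.out : p.Prime).pos).symm
  rw [key_binom z p (p-1) hp1]
  have heq : (1 : Matrix (Fin n) (Fin n) ℚ_[p]) + (p : ℚ_[p]) • z +
      (∑ i ∈ Finset.range (p-1), z ^ (i + 2) * ((p.choose (i + 2)) : Matrix (Fin n) (Fin n) ℚ_[p]))
      - 1 = (p : ℚ_[p]) • z +
      (∑ i ∈ Finset.range (p-1), z ^ (i + 2) * ((p.choose (i + 2)) : Matrix (Fin n) (Fin n) ℚ_[p])) := by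
    abel
  rw [heq]
  have hA : nm ((p : ℚ_[p]) • z) = qq p * nm z := by rw [nm_smul, nnnorm_p_cast]
  have hS : nm (∑ i ∈ Finset.range (p-1), z ^ (i + 2) *
      ((p.choose (i + 2)) : Matrix (Fin n) (Fin n) ℚ_[p])) < nm ((p : ℚ_[p]) • z) := by
    rw [hA]
    refine lt_of_le_of_lt (nm_S_le z (pow_le_one₀ zero_le qq_lt_one.le) hz p (p-1)) ?_
    calc nm z * qq p ^ 2 ≤ qq p ^ 2 * nm z := by rw [mul_comm]
      _ < qq p * nm z := by
          have hq2 : qq p ^ 2 < qq p := by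
            calc qq p ^ 2 = qq p * qq p := sq (qq p)
              _ < qq p * 1 := mul_lt_mul_of_pos_left qq_lt_one qq_pos
              _ = qq p := mul_one _
          exact mul_lt_mul_of_pos_right hq2 ((pos_iff_ne_zero.mpr h0))
  rw [nm_add_eq_left hS, hA]

theorem nm_pow_p_pow_eq (z : Matrix (Fin n) (Fin n) ℚ_[p]) (h0 : nm z ≠ 0)
    (hz : nm z ≤ qq p ^ 2) (k : ℕ) :
    nm ((1 + z) ^ (p ^ k) - 1) = qq p ^ k * nm z := by
  induction k with
  | zero => simp
  | succ k ih =>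
    have hw0 : nm ((1 + z) ^ (p ^ k) - 1) ≠ 0 := by
      rw [ih]
      exact mul_ne_zero (pow_ne_zero _ qq_pos.ne') h0
    have hw2 : nm ((1 + z) ^ (p ^ k) - 1) ≤ qq p ^ 2 := by
      rw [ih]
      calc qq p ^ k * nm z ≤ 1 * nm z :=
            mul_le_mul' (pow_le_one₀ zero_le qq_lt_one.le) le_rfl
        _ = nm z := one_mul _
        _ ≤ qq p ^ 2 := hz
    have h1 : (1 + z) ^ (p ^ (k+1)) = (1 + ((1 + z) ^ (p ^ k) - 1)) ^ p := by
      rw [add_sub_cancel, ← pow_mul, pow_succ]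
    rw [h1, nm_pow_p_eq _ hw0 hw2, ih, ← mul_assoc, ← pow_succ']

theorem nm_pow_coprime (z : Matrix (Fin n) (Fin n) ℚ_[p]) (h0 : nm z ≠ 0)
    (hz : nm z ≤ qq p ^ 2) {u : ℕ} (hu1 : 1 ≤ u) (hu : ¬ p ∣ u) :
    nm ((1 + z) ^ u - 1) = nm z := by
  have hu2 : u = (u - 1) + 1 := by omega
  rw [key_binom z u (u-1) hu2]
  have heq : (1 : Matrix (Fin n) (Fin n) ℚ_[p]) + (u : ℚ_[p]) • z +
      (∑ i ∈ Finset.range (u-1), z ^ (i + 2) * ((u.choose (i + 2)) : Matrix (Fin n) (Fin n) ℚ_[p]))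
      - 1 = (u : ℚ_[p]) • z +
      (∑ i ∈ Finset.range (u-1), z ^ (i + 2) * ((u.choose (i + 2)) : Matrix (Fin n) (Fin n) ℚ_[p])) := by
    abel
  rw [heq]
  have hA : nm ((u : ℚ_[p]) • z) = nm z := by rw [nm_smul, nnnorm_nat_eq_one hu, one_mul]
  have hS : nm (∑ i ∈ Finset.range (u-1), z ^ (i + 2) *
      ((u.choose (i + 2)) : Matrix (Fin n) (Fin n) ℚ_[p])) < nm ((u : ℚ_[p]) • z) := by
    rw [hA]
    refine lt_of_le_of_lt (nm_S_le z (pow_le_one₀ zero_le qq_lt_one.le) hz u (u-1)) ?_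
    calc nm z * qq p ^ 2 < nm z * 1 :=
          mul_lt_mul_of_pos_left (pow_lt_one₀ zero_le qq_lt_one (by omega)) ((pos_iff_ne_zero.mpr h0))
      _ = nm z := mul_one _
  rw [nm_add_eq_left hS, hA]

theorem unit_one_add (x : GL (Fin n) ℚ_[p]) :
    (x : Matrix (Fin n) (Fin n) ℚ_[p]) =
      1 + ((x : Matrix (Fin n) (Fin n) ℚ_[p]) - 1) := by abel

theorem unit_pow_shrink (x : GL (Fin n) ℚ_[p])
    (hx : nm ((x : Matrix (Fin n) (Fin n) ℚ_[p]) - 1) ≤ qq p ^ 2) (k : ℕ) :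
    nm (((x ^ (p ^ k) : GL (Fin n) ℚ_[p]) : Matrix (Fin n) (Fin n) ℚ_[p]) - 1)
      ≤ qq p ^ (k + 2) := by
  rw [Units.val_pow_eq_pow_val]
  rw [unit_one_add x]
  exact nm_pow_p_pow_le _ hx k

theorem unit_torsion_free (x : GL (Fin n) ℚ_[p])
    (hx : nm ((x : Matrix (Fin n) (Fin n) ℚ_[p]) - 1) ≤ qq p ^ 2) {m : ℕ} (hm : m ≠ 0)
    (hxm : x ^ m = 1) : x = 1 := by
  by_contra hne
  set z : Matrix (Fin n) (Fin n) ℚ_[p] := (x : Matrix (Fin n) (Fin n) ℚ_[p]) - 1 with hzdef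
  have h0 : nm z ≠ 0 := by
    intro h
    apply hne
    have hz0 : z = 0 := nm_eq_zero_iff.mp h
    have : (x : Matrix (Fin n) (Fin n) ℚ_[p]) = 1 := by
      have := hz0
      rw [hzdef, sub_eq_zero] at this
      exact this
    exact Units.ext this
  set k := m.factorization p with hk
  set u := m / p ^ k with hu
  have hmu : p ^ k * u = m := Nat.ordProj_mul_ordCompl_eq_self m p
  have hpu : ¬ p ∣ u := Nat.not_dvd_ordCompl (Fact.out : p.Prime) hm
  have hu1 : 1 ≤ u := Nat.ordCompl_pos p hm
  have hw : nm ((1 + z) ^ (p ^ k) - 1) = qq p ^ k * nm z := nm_pow_p_pow_eq z h0 hx k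
  have hw0 : nm ((1 + z) ^ (p ^ k) - 1) ≠ 0 := by
    rw [hw]; exact mul_ne_zero (pow_ne_zero _ qq_pos.ne') h0
  have hw2 : nm ((1 + z) ^ (p ^ k) - 1) ≤ qq p ^ 2 := by
    rw [hw]
    calc qq p ^ k * nm z ≤ 1 * nm z :=
          mul_le_mul' (pow_le_one₀ zero_le qq_lt_one.le) le_rfl
      _ = nm z := one_mul _
      _ ≤ qq p ^ 2 := hx
  have hcontra : nm ((1 + ((1 + z) ^ (p ^ k) - 1)) ^ u - 1) = nm ((1 + z) ^ (p ^ k) - 1) :=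
    nm_pow_coprime _ hw0 hw2 hu1 hpu
  have hone : (1 + ((1 + z) ^ (p ^ k) - 1)) ^ u = 1 := by
    rw [add_sub_cancel, ← pow_mul, hmu, ← unit_one_add x, ← Units.val_pow_eq_pow_val x m, hxm,
      Units.val_one]
  rw [hone, sub_self] at hcontra
  exact hw0 (by rw [← hcontra, nm_eq_zero_iff])

def congU (p : ℕ) [Fact p.Prime] (n : ℕ) : Subgroup (GL (Fin n) ℚ_[p]) where
  carrier := {g | nm ((g : Matrix (Fin n) (Fin n) ℚ_[p]) - 1) ≤ qq p ^ 2}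
  one_mem' := by simp [nm_eq_zero_iff.mpr rfl]
  mul_mem' := by
    intro a b ha hb
    simp only [Set.mem_setOf_eq] at *
    have hab : ((a * b : GL (Fin n) ℚ_[p]) : Matrix (Fin n) (Fin n) ℚ_[p]) - 1 =
        ((a : Matrix (Fin n) (Fin n) ℚ_[p]) - 1) * ((b : Matrix (Fin n) (Fin n) ℚ_[p]) - 1)
          + (((a : Matrix (Fin n) (Fin n) ℚ_[p]) - 1) + ((b : Matrix (Fin n) (Fin n) ℚ_[p]) - 1)) := by
      rw [Units.val_mul]
      noncomm_ring
    rw [hab]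
    refine le_trans (nm_add_le _ _) (sup_le ?_ (le_trans (nm_add_le _ _) (sup_le ha hb)))
    calc nm (((a : Matrix (Fin n) (Fin n) ℚ_[p]) - 1) * ((b : Matrix (Fin n) (Fin n) ℚ_[p]) - 1))
        ≤ nm ((a : Matrix (Fin n) (Fin n) ℚ_[p]) - 1) * nm ((b : Matrix (Fin n) (Fin n) ℚ_[p]) - 1) :=
          nm_mul_le _ _
      _ ≤ qq p ^ 2 * qq p ^ 2 := mul_le_mul' ha hb
      _ ≤ 1 * qq p ^ 2 := mul_le_mul' (pow_le_one₀ zero_le qq_lt_one.le) le_rfl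
      _ = qq p ^ 2 := one_mul _
  inv_mem' := by
    intro g hg
    simp only [Set.mem_setOf_eq] at *
    set v : Matrix (Fin n) (Fin n) ℚ_[p] := ((g⁻¹ : GL (Fin n) ℚ_[p]) : Matrix (Fin n) (Fin n) ℚ_[p]) with hv
    set u : Matrix (Fin n) (Fin n) ℚ_[p] := (g : Matrix (Fin n) (Fin n) ℚ_[p]) with hu
    have huv : u * v = 1 := by
      rw [hu, hv, ← Units.val_mul, mul_inv_cancel, Units.val_one]
    have hid : v - 1 = (1 - u) + (1 - u) * (v - 1) := by
      have h1 : (1 - u) * v = v - 1 := by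
        rw [sub_mul, one_mul, huv]
      calc v - 1 = (1 - u) * v := h1.symm
        _ = (1 - u) * (1 + (v - 1)) := by rw [add_sub_cancel]
        _ = (1 - u) + (1 - u) * (v - 1) := by noncomm_ring
    have h1u : nm (1 - u) ≤ qq p ^ 2 := by
      have : (1 : Matrix (Fin n) (Fin n) ℚ_[p]) - u = -(u - 1) := (neg_sub u 1).symm
      rw [this, nm_neg]
      exact hg
    by_cases h0 : nm (v - 1) ≤ qq p ^ 2
    · exact h0
    · exfalso
      have hb : nm (v - 1) ≤ max (qq p ^ 2) (qq p ^ 2 * nm (v - 1)) := by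
        calc nm (v - 1) = nm ((1 - u) + (1 - u) * (v - 1)) := by rw [← hid]
          _ ≤ max (nm (1 - u)) (nm ((1 - u) * (v - 1))) := nm_add_le _ _
          _ ≤ max (qq p ^ 2) (qq p ^ 2 * nm (v - 1)) := by
              refine max_le_max h1u ?_
              exact le_trans (nm_mul_le _ _) (mul_le_mul' h1u le_rfl)
      rcases max_cases (qq p ^ 2) (qq p ^ 2 * nm (v - 1)) with ⟨hm, _⟩ | ⟨hm, _⟩
      · rw [hm] at hb; exact h0 hb
      · rw [hm] at hb
        have hvpos : 0 < nm (v - 1) :=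
          pos_iff_ne_zero.mpr (fun hz => h0 (by rw [hz]; exact zero_le))
        have : nm (v - 1) < nm (v - 1) := by
          calc nm (v - 1) ≤ qq p ^ 2 * nm (v - 1) := hb
            _ < 1 * nm (v - 1) :=
                mul_lt_mul_of_pos_right (pow_lt_one₀ zero_le qq_lt_one (by omega)) hvpos
            _ = nm (v - 1) := one_mul _
        exact lt_irrefl _ this

theorem mem_congU_iff (g : GL (Fin n) ℚ_[p]) :
    g ∈ congU p n ↔ nm ((g : Matrix (Fin n) (Fin n) ℚ_[p]) - 1) ≤ qq p ^ 2 := Iff.rfl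

theorem congU_open : IsOpen ((congU p n : Subgroup (GL (Fin n) ℚ_[p])) :
    Set (GL (Fin n) ℚ_[p])) := by
  have hS : IsOpen {A : Matrix (Fin n) (Fin n) ℚ_[p] | nm (A - 1) ≤ qq p ^ 2} := by
    have : {A : Matrix (Fin n) (Fin n) ℚ_[p] | nm (A - 1) ≤ qq p ^ 2} =
        ⋂ ij : Fin n × Fin n, (fun A : Matrix (Fin n) (Fin n) ℚ_[p] => A ij.1 ij.2) ⁻¹'
          Metric.closedBall ((1 : Matrix (Fin n) (Fin n) ℚ_[p]) ij.1 ij.2) ((qq p ^ 2 : NNReal) : ℝ) := by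
      ext A
      simp only [Set.mem_setOf_eq, Set.mem_iInter, Set.mem_preimage, Metric.mem_closedBall]
      rw [nm_le_iff]
      constructor
      · intro h ij
        rw [dist_eq_norm]
        have := h ij.1 ij.2
        rw [Matrix.sub_apply] at this
        exact_mod_cast this
      · intro h i j
        have := h (i, j)
        rw [dist_eq_norm] at this
        rw [Matrix.sub_apply]
        exact_mod_cast this
    rw [this]
    refine isOpen_iInter_of_finite fun ij => ?_
    refine IsOpen.preimage (continuous_id.matrix_elem ij.1 ij.2) ?_
    refine IsUltrametricDist.isOpen_closedBall _ ?_
    have : (0:ℝ) < ((qq p ^ 2 : NNReal) : ℝ) := by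
      exact_mod_cast pow_pos qq_pos 2
    exact this.ne'
  have : ((congU p n : Subgroup (GL (Fin n) ℚ_[p])) : Set (GL (Fin n) ℚ_[p])) =
      Units.val ⁻¹' {A : Matrix (Fin n) (Fin n) ℚ_[p] | nm (A - 1) ≤ qq p ^ 2} := rfl
  rw [this]
  exact hS.preimage Units.continuous_val

end AuxStmt17

set_option maxHeartbeats 1000000 in
set_option synthInstance.maxHeartbeats 400000 in
/-- let `C` be a torus over `ℚ_p` (a commutative subgroup of
`GL n ℚ_p` that is simultaneously diagonalizable over the algebraic closure),
and let `E` be the maximal compact subgroup of its group of points.  If `Γ` is a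
nilpotent group of finite Hirsch rank and `H` is a finite-index subgroup whose
abelianization is `p`-radicable, then every homomorphism from `H` to `E` has
finite image. -/
theorem stmt17 (p : ℕ) [Fact p.Prime] (n : ℕ)
    (C : Subgroup (GL (Fin n) ℚ_[p]))
    (hCcomm : ∀ a ∈ C, ∀ b ∈ C, a * b = b * a)
    (hCdiag : ∃ h : GL (Fin n) (AlgebraicClosure ℚ_[p]), ∀ c ∈ C,
      ∃ d : Fin n → (AlgebraicClosure ℚ_[p])ˣ,
        ((h * glMapAC p c * h⁻¹ : GL (Fin n) (AlgebraicClosure ℚ_[p])) :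
          Matrix (Fin n) (Fin n) (AlgebraicClosure ℚ_[p])) =
          Matrix.diagonal fun i => (d i : AlgebraicClosure ℚ_[p]))
    (E : Subgroup (GL (Fin n) ℚ_[p])) (hEC : E ≤ C)
    (hEcpt : IsCompact (E : Set (GL (Fin n) ℚ_[p])))
    (hEmax : ∀ K : Subgroup (GL (Fin n) ℚ_[p]),
      K ≤ C → IsCompact (K : Set (GL (Fin n) ℚ_[p])) → K ≤ E)
    (Γ : Type*) [Group Γ] [Group.IsNilpotent Γ] (hΓrank : hirschRank Γ ≠ ⊤)
    (H : Subgroup Γ) (hHfi : H.index ≠ 0)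
    (hrad : IsPRadicable (Abelianization H) p)
    (f : H →* GL (Fin n) ℚ_[p]) (hfE : ∀ x : H, f x ∈ E) :
    (Set.range f).Finite := by
  classical
  set K : Subgroup (GL (Fin n) ℚ_[p]) := f.range with hKdef
  have hKE : K ≤ E := by rintro x ⟨y, rfl⟩; exact hfE y
  have hKC : K ≤ C := le_trans hKE hEC
  letI : CommGroup ↥K :=
    { (inferInstance : Group ↥K) with
      mul_comm := fun a b => Subtype.ext (hCcomm _ (hKC a.2) _ (hKC b.2)) }
  have hradK : ∀ c : ↥K, ∃ d : ↥K, d ^ p = c := by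
    intro c
    obtain ⟨x, hx⟩ := f.rangeRestrict_surjective c
    obtain ⟨a, ha⟩ := hrad (Abelianization.of x)
    refine ⟨Abelianization.lift f.rangeRestrict a, ?_⟩
    rw [← map_pow, ha, Abelianization.lift_apply_of, hx]
  have hradKpow : ∀ (k : ℕ) (c : ↥K), ∃ d : ↥K, d ^ (p ^ k) = c := by
    intro k
    induction k with
    | zero => exact fun c => ⟨c, pow_one c⟩
    | succ k ih =>
      intro c
      obtain ⟨d, hd⟩ := ih c
      obtain ⟨e, he⟩ := hradK d
      exact ⟨e, by rw [pow_succ', pow_mul, he, hd]⟩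
  -- finite cover of E by cosets of the congruence subgroup
  obtain ⟨t, ht⟩ := hEcpt.elim_finite_subcover
    (fun g : ↥(E : Set (GL (Fin n) ℚ_[p])) =>
      (fun x => (g : GL (Fin n) ℚ_[p]) * x) '' (congU p n : Set (GL (Fin n) ℚ_[p])))
    (fun g => (Homeomorph.mulLeft (g : GL (Fin n) ℚ_[p])).isOpenMap _ congU_open)
    (by
      intro x hx
      refine Set.mem_iUnion.mpr ⟨⟨x, hx⟩, ⟨1, (congU p n).one_mem, mul_one x⟩⟩)
  have hmem_coset : ∀ (τ : ↥(E : Set (GL (Fin n) ℚ_[p]))) (x : GL (Fin n) ℚ_[p]),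
      x ∈ (fun y => (τ : GL (Fin n) ℚ_[p]) * y) '' (congU p n : Set (GL (Fin n) ℚ_[p])) →
      (τ : GL (Fin n) ℚ_[p])⁻¹ * x ∈ congU p n := by
    rintro τ x ⟨u, hu, rfl⟩
    simpa [inv_mul_cancel_left] using hu
  set m : ℕ := t.card.factorial with hmdef
  have hm0 : m ≠ 0 := Nat.factorial_ne_zero _
  have hbm : ∀ b : GL (Fin n) ℚ_[p], b ∈ K → b ^ m ∈ congU p n := by
    intro b hb
    have hex : ∀ i : ℕ, ∃ τ : ↥(E : Set (GL (Fin n) ℚ_[p])), τ ∈ t ∧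
        (τ : GL (Fin n) ℚ_[p])⁻¹ * b ^ i ∈ congU p n := by
      intro i
      have hbE : b ^ i ∈ E := pow_mem (hKE hb) i
      obtain ⟨τ, hτ, hmem⟩ := Set.mem_iUnion₂.mp (ht hbE)
      exact ⟨τ, hτ, hmem_coset τ _ hmem⟩
    choose φ hφt hφm using hex
    obtain ⟨i, hi, j, hj, hij, hphi⟩ := Finset.exists_ne_map_eq_of_card_lt_of_maps_to
      (s := Finset.range (t.card + 1)) (t := t) (by simp) (fun a _ => hφt a)
    have main : ∀ i j : ℕ, i < j → j ≤ t.card → φ i = φ j → b ^ m ∈ congU p n := by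
      intro i j hlt hjle hphi
      have h1 := hφm i
      have h2 := hφm j
      rw [hphi] at h1
      have h3 : ((φ j : GL (Fin n) ℚ_[p])⁻¹ * b ^ i)⁻¹ *
          ((φ j : GL (Fin n) ℚ_[p])⁻¹ * b ^ j) ∈ congU p n :=
        (congU p n).mul_mem ((congU p n).inv_mem h1) h2
      have h4 : ((φ j : GL (Fin n) ℚ_[p])⁻¹ * b ^ i)⁻¹ *
          ((φ j : GL (Fin n) ℚ_[p])⁻¹ * b ^ j) = b ^ (j - i) := by
        have hbj : b ^ j = b ^ i * b ^ (j - i) := by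
          rw [← pow_add]
          congr 1
          omega
        rw [hbj]
        group
      rw [h4] at h3
      have hdvd : (j - i) ∣ m := Nat.dvd_factorial (by omega) (by omega)
      have : b ^ m = (b ^ (j - i)) ^ (m / (j - i)) := by
        rw [← pow_mul, Nat.mul_div_cancel' hdvd]
      rw [this]
      exact pow_mem h3 _
    have hjle : j ≤ t.card := by
      have := Finset.mem_range.mp hj
      omega
    have hile : i ≤ t.card := by
      have := Finset.mem_range.mp hi
      omega
    rcases hij.lt_or_gt with hlt | hlt
    · exact main i j hlt hjle hphi
    · exact main j i hlt hile hphi.symm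
  -- the intersection K ∩ congU is trivial
  have hKU : ∀ a : GL (Fin n) ℚ_[p], a ∈ K → a ∈ congU p n → a = 1 := by
    intro a haK haU
    have hshr : ∀ k : ℕ,
        nm (((a ^ m : GL (Fin n) ℚ_[p]) : Matrix (Fin n) (Fin n) ℚ_[p]) - 1) ≤ qq p ^ (k + 2) := by
      intro k
      obtain ⟨c, hc⟩ := hradKpow k ⟨a, haK⟩
      have hc' : (c : GL (Fin n) ℚ_[p]) ^ (p ^ k) = a := by
        have := congrArg (Subtype.val) hc
        push_cast at this
        exact this
      have hcm : (c : GL (Fin n) ℚ_[p]) ^ m ∈ congU p n := hbm _ c.2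
      have ham : a ^ m = ((c : GL (Fin n) ℚ_[p]) ^ m) ^ (p ^ k) := by
        rw [← hc', ← pow_mul, ← pow_mul, mul_comm]
      rw [ham]
      exact unit_pow_shrink _ hcm k
    have hzero : nm (((a ^ m : GL (Fin n) ℚ_[p]) : Matrix (Fin n) (Fin n) ℚ_[p]) - 1) = 0 := by
      by_contra h0
      obtain ⟨k, hk⟩ := exists_pow_lt_of_lt_one (pos_iff_ne_zero.mpr h0) (qq_lt_one (p := p))
      have h1 := hshr k
      have h2 : qq p ^ (k + 2) ≤ qq p ^ k :=
        pow_le_pow_of_le_one zero_le qq_lt_one.le (by omega)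
      exact absurd (h1.trans h2) (not_le.mpr hk)
    have ham1 : a ^ m = 1 := by
      have h1 : ((a ^ m : GL (Fin n) ℚ_[p]) : Matrix (Fin n) (Fin n) ℚ_[p]) - 1 = 0 :=
        nm_eq_zero_iff.mp hzero
      rw [sub_eq_zero] at h1
      exact Units.ext h1
    exact unit_torsion_free a haU hm0 ham1
  -- conclude
  have hsub : Set.range f ⊆ ⋃ τ ∈ t,
      (((fun y => (τ : GL (Fin n) ℚ_[p]) * y) '' (congU p n : Set (GL (Fin n) ℚ_[p]))) ∩
        (K : Set (GL (Fin n) ℚ_[p]))) := by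
    rintro x ⟨y, rfl⟩
    have hx : f y ∈ K := ⟨y, rfl⟩
    obtain ⟨τ, hτ, hmem⟩ := Set.mem_iUnion₂.mp (ht (hKE hx))
    exact Set.mem_iUnion₂.mpr ⟨τ, hτ, hmem, hx⟩
  refine Set.Finite.subset (Set.Finite.biUnion t.finite_toSet fun τ _ => ?_) hsub
  refine Set.Subsingleton.finite ?_
  rintro x ⟨hx1, hx2⟩ y ⟨hy1, hy2⟩
  have h1 := hmem_coset τ x hx1
  have h2 := hmem_coset τ y hy1
  have h3 : x⁻¹ * y ∈ congU p n := by
    have h4 : ((τ : GL (Fin n) ℚ_[p])⁻¹ * x)⁻¹ * ((τ : GL (Fin n) ℚ_[p])⁻¹ * y) = x⁻¹ * y := by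
      group
    have := (congU p n).mul_mem ((congU p n).inv_mem h1) h2
    rwa [h4] at this
  have h5 : x⁻¹ * y ∈ K := K.mul_mem (K.inv_mem hx2) hy2
  have := hKU _ h5 h3
  exact (inv_mul_eq_one.mp this)
end

section
/- If S is a nonempty finite set of primes and U is a unipotent algebraic group over ℚ, then any S-arithmetic subgroup Γ of U (a subgroup commensurable with U(ℤ[1/S])) has no infinite cyclic quotient: every group homomorphism Γ → ℤ is trivial. -/
open Matrix

/-- The Zariski topology on `σ → k`: generated by complements of hypersurfaces. -/
def zariskiTop (σ k : Type*) [CommSemiring k] : TopologicalSpace (σ → k) :=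
  .generateFrom {U | ∃ f : MvPolynomial σ k, U = {x | MvPolynomial.eval x f ≠ 0}}

/-- View a square matrix as a function on pairs of indices. -/
def matFun {n : ℕ} {k : Type*} (A : Matrix (Fin n) (Fin n) k) : Fin n × Fin n → k :=
  fun q => A q.1 q.2

/-- The Zariski topology on `n × n` matrices. -/
def zariskiMat (n : ℕ) (k : Type*) [CommSemiring k] :
    TopologicalSpace (Matrix (Fin n) (Fin n) k) :=
  TopologicalSpace.induced matFun (zariskiTop (Fin n × Fin n) k)

/-- The set of matrices underlying a subgroup of `GL n k`. -/
def subgroupMatSet {n : ℕ} {k : Type*} [CommRing k] (Γ : Subgroup (GL (Fin n) k)) :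
    Set (Matrix (Fin n) (Fin n) k) :=
  (fun g : GL (Fin n) k => (g : Matrix (Fin n) (Fin n) k)) '' (Γ : Set (GL (Fin n) k))

/-- Zariski closure of a set of matrices. -/
noncomputable def matClosure {n : ℕ} {k : Type*} [CommSemiring k]
    (s : Set (Matrix (Fin n) (Fin n) k)) : Set (Matrix (Fin n) (Fin n) k) :=
  letI := zariskiMat n k
  closure s

/-- The ring `ℤ[1/S]` of `S`-integers, as a subring of `ℚ`. -/
def sIntegers (S : Finset ℕ) : Subring ℚ :=
  Subring.closure {x : ℚ | ∃ q ∈ S, x = (q : ℚ)⁻¹}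

/-! ### Auxiliary lemmas -/

lemma desc_smeval_prod {R : Type*} [CommRing R] (t : R) (i : ℕ) :
    (descPochhammer ℤ i).smeval t = ∏ j ∈ Finset.range i, (t - j) := by
  induction i with
  | zero => simp [descPochhammer_zero, Polynomial.smeval_one]
  | succ m ih =>
      rw [descPochhammer_succ_right, Polynomial.smeval_mul, ih, Finset.prod_range_succ]
      congr 1
      simp [Polynomial.smeval_sub, Polynomial.smeval_X, Polynomial.smeval_natCast]

lemma fact_mul_choose_eq_prod {R : Type*} [CommRing R] [BinomialRing R] (t : R) (i : ℕ) :
    (i.factorial : R) * Ring.choose t i = ∏ j ∈ Finset.range i, (t - j) := by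
  rw [← desc_smeval_prod, Ring.descPochhammer_eq_factorial_smul_choose, nsmul_eq_mul]

lemma choose_div_pow_mem (S : Finset ℕ) {q : ℕ} (hq : q ∈ S) (hqp : q.Prime)
    (a : ℤ) (k i : ℕ) :
    Ring.choose ((a : ℚ) / (q : ℚ) ^ k) i ∈ sIntegers S := by
  have hq0 : (q : ℚ) ≠ 0 := Nat.cast_ne_zero.mpr hqp.ne_zero
  have hqinv : ((q : ℚ))⁻¹ ∈ sIntegers S := Subring.subset_closure ⟨q, hq, rfl⟩
  set t : ℚ := (a : ℚ) / (q : ℚ) ^ k with ht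
  set α : ℕ := (i.factorial).factorization q with hα
  set β : ℕ := i.factorial / q ^ α with hβ
  have hfacne : i.factorial ≠ 0 := Nat.factorial_ne_zero i
  have hfac : q ^ α * β = i.factorial := Nat.ordProj_mul_ordCompl_eq_self i.factorial q
  have hβ0 : β ≠ 0 := (Nat.ordCompl_pos q hfacne).ne'
  have hcop : Nat.Coprime q β := Nat.coprime_ordCompl hqp hfacne
  set P : ℤ := ∏ j ∈ Finset.range i, (a - (j : ℤ) * (q : ℤ) ^ k) with hP
  have hPcast : ((q : ℚ) ^ k) ^ i * ∏ j ∈ Finset.range i, (t - (j : ℚ)) = (P : ℚ) := by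
    have e1 : ∏ j ∈ Finset.range i, ((q:ℚ)^k * (t - (j:ℚ))) = (P : ℚ) := by
      push_cast [hP]
      refine Finset.prod_congr rfl fun j _ => ?_
      rw [ht]
      field_simp
    rw [← e1, Finset.prod_mul_distrib, Finset.prod_const, Finset.card_range]
  have hcopk : IsCoprime ((β : ℤ)) ((q : ℤ) ^ k) := by
    have h := Nat.isCoprime_iff_coprime.mpr ((hcop.symm).pow_right k)
    push_cast at h
    exact h
  obtain ⟨u, c, huc⟩ := hcopk
  have hβdvd : (β : ℤ) ∣ c ^ i * P := by
    have h2 : c ^ i * P = ∏ j ∈ Finset.range i, (c * a - (j : ℤ) * (c * (q:ℤ)^k)) := by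
      have e2 : ∏ j ∈ Finset.range i, (c * (a - (j:ℤ) * (q:ℤ)^k)) =
          ∏ j ∈ Finset.range i, (c * a - (j : ℤ) * (c * (q:ℤ)^k)) :=
        Finset.prod_congr rfl fun j _ => by ring
      rw [← e2, Finset.prod_mul_distrib, Finset.prod_const, Finset.card_range, hP]
    have h1 : ((c : ZMod β) * ((q : ZMod β))^k) = 1 := by
      have e3 : (c * (q:ℤ)^k : ℤ) = 1 - u * (β:ℤ) := by linear_combination huc
      have e4 := congrArg (fun z : ℤ => (z : ZMod β)) e3
      push_cast at e4
      simpa using e4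
    have h3 : ((c ^ i * P : ℤ) : ZMod β) =
        ((∏ j ∈ Finset.range i, (c * a - (j : ℤ)) : ℤ) : ZMod β) := by
      rw [h2]
      push_cast
      refine Finset.prod_congr rfl fun j _ => ?_
      rw [h1, mul_one]
    have hfactdvd : ((i.factorial : ℤ)) ∣ ∏ j ∈ Finset.range i, (c * a - (j : ℤ)) :=
      ⟨Ring.choose (c * a) i, (fact_mul_choose_eq_prod (c * a) i).symm⟩
    have hβfact : (β : ℤ) ∣ (i.factorial : ℤ) :=
      Int.natCast_dvd_natCast.mpr (Dvd.intro_left _ hfac)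
    have h4 : ((∏ j ∈ Finset.range i, (c * a - (j : ℤ)) : ℤ) : ZMod β) = 0 := by
      rw [ZMod.intCast_zmod_eq_zero_iff_dvd]
      exact hβfact.trans hfactdvd
    rw [← ZMod.intCast_zmod_eq_zero_iff_dvd, h3, h4]
  have hcopc : IsCoprime ((β : ℤ)) c := ⟨u, (q : ℤ) ^ k, by linear_combination huc⟩
  have hdvdP : (β : ℤ) ∣ P := (hcopc.pow_right).dvd_of_dvd_mul_left hβdvd
  obtain ⟨d, hd⟩ := hdvdP
  have hβq0 : (β : ℚ) ≠ 0 := Nat.cast_ne_zero.mpr hβ0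
  have h1 : (i.factorial : ℚ) * Ring.choose t i = ∏ j ∈ Finset.range i, (t - (j:ℚ)) :=
    fact_mul_choose_eq_prod t i
  have h6 : (i.factorial : ℚ) = (q : ℚ) ^ α * (β : ℚ) := by exact_mod_cast hfac.symm
  have h5 : ((q : ℚ) ^ k) ^ i * ((q:ℚ)^α * (β:ℚ) * Ring.choose t i) = (β : ℚ) * (d : ℚ) := by
    rw [← h6, h1, hPcast, hd]
    push_cast
    ring
  have h7 : (β:ℚ) * ((q:ℚ)^(k*i+α) * Ring.choose t i) = (β:ℚ) * ((d:ℚ)) := by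
    linear_combination h5
  have h8 : (q:ℚ)^(k*i+α) * Ring.choose t i = (d:ℚ) := mul_left_cancel₀ hβq0 h7
  have hqe0 : (q:ℚ)^(k*i+α) ≠ 0 := pow_ne_zero _ hq0
  have hchoose : Ring.choose t i = (d : ℚ) * ((q : ℚ)⁻¹) ^ (k * i + α) := by
    rw [inv_pow]
    field_simp
    linear_combination h8
  rw [hchoose]
  exact mul_mem (intCast_mem (sIntegers S) d) (pow_mem hqinv _)

/-! ### Unipotent rational powers -/

noncomputable def binPoly (n : ℕ) (t : ℚ) : Polynomial ℚ :=
  ∑ i ∈ Finset.range n, Polynomial.C (Ring.choose t i) * Polynomial.X ^ i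

lemma binPoly_coeff (n : ℕ) (t : ℚ) (k : ℕ) :
    (binPoly n t).coeff k = if k < n then Ring.choose t k else 0 := by
  rw [binPoly, Polynomial.finset_sum_coeff]
  simp only [Polynomial.coeff_C_mul, Polynomial.coeff_X_pow, mul_ite, mul_one, mul_zero]
  rw [Finset.sum_ite_eq (Finset.range n) k (fun i => Ring.choose t i)]
  simp [Finset.mem_range]

lemma binPoly_mul_dvd (n : ℕ) (s t : ℚ) :
    (Polynomial.X : Polynomial ℚ) ^ n ∣ binPoly n s * binPoly n t - binPoly n (s + t) := by
  rw [Polynomial.X_pow_dvd_iff]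
  intro d hd
  rw [Polynomial.coeff_sub, Polynomial.coeff_mul, binPoly_coeff, if_pos hd]
  rw [Ring.add_choose_eq d (Commute.all s t)]
  rw [sub_eq_zero]
  refine Finset.sum_congr rfl fun ij hij => ?_
  have hij' := Finset.HasAntidiagonal.mem_antidiagonal.mp hij
  rw [binPoly_coeff, binPoly_coeff, if_pos (by omega), if_pos (by omega)]

noncomputable def upow {n : ℕ} (N : Matrix (Fin n) (Fin n) ℚ) (t : ℚ) :
    Matrix (Fin n) (Fin n) ℚ :=
  Polynomial.aeval N (binPoly n t)

lemma upow_add {n : ℕ} (N : Matrix (Fin n) (Fin n) ℚ) (hN : N ^ n = 0) (s t : ℚ) :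
    upow N s * upow N t = upow N (s + t) := by
  obtain ⟨c, hc⟩ := binPoly_mul_dvd n s t
  rw [upow, upow, upow, ← _root_.map_mul]
  have h2 : (Polynomial.aeval N) (binPoly n s * binPoly n t) -
      (Polynomial.aeval N) (binPoly n (s+t)) = 0 := by
    rw [← map_sub, hc]; simp [hN]
  linear_combination (norm := abel) h2

lemma upow_apply {n : ℕ} (N : Matrix (Fin n) (Fin n) ℚ) (t : ℚ) :
    upow N t = ∑ i ∈ Finset.range n, Ring.choose t i • N ^ i := by
  rw [upow, binPoly]
  simp only [_root_.map_sum, _root_.map_mul, map_pow, Polynomial.aeval_X, Polynomial.aeval_C]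
  refine Finset.sum_congr rfl fun i _ => ?_
  rw [Algebra.smul_def]

lemma upow_zero {n : ℕ} (N : Matrix (Fin n) (Fin n) ℚ) (hn : 0 < n) : upow N 0 = 1 := by
  rw [upow_apply]
  rw [Finset.sum_eq_single 0]
  · simp [Ring.choose_zero_right]
  · intro i _ hi
    have : Ring.choose (0:ℚ) i = 0 := by
      have := Ring.choose_natCast (R := ℚ) 0 i
      simpa [Nat.choose_eq_zero_of_lt (Nat.pos_of_ne_zero hi)] using this
    simp [this]
  · intro h; simp [Finset.mem_range, hn] at h

lemma upow_one {n : ℕ} (N : Matrix (Fin n) (Fin n) ℚ) (hN : N ^ n = 0) (hn : 0 < n) :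
    upow N 1 = 1 + N := by
  have hone : ∀ i : ℕ, Ring.choose (1:ℚ) i = (Nat.choose 1 i : ℚ) := fun i => by
    simpa using Ring.choose_natCast (R := ℚ) 1 i
  rw [upow_apply]
  have hsummand : ∀ i ∈ Finset.range n, Ring.choose (1:ℚ) i • N ^ i =
      ((if i = 0 then (1 : Matrix (Fin n) (Fin n) ℚ) else 0) + (if i = 1 then N else 0)) := by
    intro i _
    rcases i with _ | _ | i <;>
      simp [hone, Nat.choose_eq_zero_of_lt, Nat.succ_lt_succ]
  rw [Finset.sum_congr rfl hsummand, Finset.sum_add_distrib]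
  rw [Finset.sum_ite_eq' (Finset.range n) 0 (fun _ => (1 : Matrix (Fin n) (Fin n) ℚ))]
  rw [Finset.sum_ite_eq' (Finset.range n) 1 (fun _ => N)]
  rcases Nat.lt_or_ge n 2 with h2 | h2
  · interval_cases n
    have hN0 : N = 0 := by simpa using hN
    simp [hN0]
  · rw [if_pos (Finset.mem_range.mpr hn), if_pos (Finset.mem_range.mpr (by omega))]

lemma upow_natCast {n : ℕ} (N : Matrix (Fin n) (Fin n) ℚ) (hN : N ^ n = 0) (hn : 0 < n) (m : ℕ) :
    upow N (m : ℚ) = (1 + N) ^ m := by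
  induction m with
  | zero => simpa using upow_zero N hn
  | succ l ih =>
      have h : ((l + 1 : ℕ) : ℚ) = (l : ℚ) + 1 := by push_cast; ring
      rw [h, ← upow_add N hN, ih, upow_one N hN hn, pow_succ]

lemma upow_pow {n : ℕ} (N : Matrix (Fin n) (Fin n) ℚ) (hN : N ^ n = 0) (hn : 0 < n)
    (t : ℚ) (m : ℕ) : upow N t ^ m = upow N (m * t) := by
  induction m with
  | zero => simpa using (upow_zero N hn).symm
  | succ l ih =>
      rw [pow_succ, ih, upow_add N hN]
      push_cast
      ring_nf

lemma upow_entries_mem {n : ℕ} (S : Finset ℕ) {q : ℕ} (hq : q ∈ S) (hqp : q.Prime)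
    (N : Matrix (Fin n) (Fin n) ℚ) (hNmem : ∀ i j, N i j ∈ sIntegers S)
    (a : ℤ) (k : ℕ) (i j : Fin n) :
    upow N ((a : ℚ) / (q : ℚ) ^ k) i j ∈ sIntegers S := by
  have hpowmem : ∀ (l : ℕ) (i j : Fin n), (N ^ l) i j ∈ sIntegers S := by
    intro l
    induction l with
    | zero =>
        intro i j
        rw [pow_zero, Matrix.one_apply]
        split <;> simp [Subring.one_mem, Subring.zero_mem]
    | succ l ih =>
        intro i j
        rw [pow_succ, Matrix.mul_apply]
        exact sum_mem fun c _ => mul_mem (ih i c) (hNmem c j)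
  rw [upow_apply]
  rw [Matrix.sum_apply]
  refine sum_mem fun l _ => ?_
  rw [Matrix.smul_apply, smul_eq_mul]
  exact mul_mem (choose_div_pow_mem S hq hqp a k l) (hpowmem l i j)

/-! ### Zariski density of integer points on the one-parameter group -/

lemma eval_aeval {σ : Type*} (g : σ → Polynomial ℚ) (f : MvPolynomial σ ℚ) (t : ℚ) :
    Polynomial.eval t (MvPolynomial.aeval g f) = MvPolynomial.eval (fun s => (g s).eval t) f := by
  induction f using MvPolynomial.induction_on with
  | C a => simp
  | add p q hp hq => simp [hp, hq]
  | mul_X p s hp => simp [hp]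

lemma zar_dense {σ : Type*} (g : σ → Polynomial ℚ) (O : Set (σ → ℚ))
    (hO : TopologicalSpace.GenerateOpen
      {V | ∃ f : MvPolynomial σ ℚ, V = {x | MvPolynomial.eval x f ≠ 0}} O) (t : ℚ)
    (ht : (fun s => (g s).eval t) ∈ O) :
    ∃ F : Finset ℚ, ∀ u : ℚ, u ∉ F → (fun s => (g s).eval u) ∈ O := by
  induction hO with
  | basic V hV =>
      obtain ⟨f, rfl⟩ := hV
      set p := MvPolynomial.aeval g f with hp
      have hpt : p.eval t ≠ 0 := by rw [hp, eval_aeval]; exact ht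
      have hp0 : p ≠ 0 := fun h => hpt (by simp [h])
      refine ⟨p.roots.toFinset, fun u hu => ?_⟩
      show MvPolynomial.eval _ f ≠ 0
      rw [← eval_aeval]
      intro h0
      exact hu (Multiset.mem_toFinset.mpr ((Polynomial.mem_roots hp0).mpr h0))
  | univ => exact ⟨∅, fun u _ => trivial⟩
  | inter V W _ _ ihV ihW =>
      obtain ⟨F1, hF1⟩ := ihV ht.1
      obtain ⟨F2, hF2⟩ := ihW ht.2
      exact ⟨F1 ∪ F2, fun u hu =>
        ⟨hF1 u (fun h => hu (Finset.mem_union_left _ h)),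
         hF2 u (fun h => hu (Finset.mem_union_right _ h))⟩⟩
  | sUnion K hK ih =>
      obtain ⟨V, hVK, hV⟩ := ht
      obtain ⟨F, hF⟩ := ih V hVK hV
      exact ⟨F, fun u hu => Set.mem_sUnion.mpr ⟨V, hVK, hF u hu⟩⟩

noncomputable def Cpoly (l : ℕ) : Polynomial ℚ :=
  (l.factorial : ℚ)⁻¹ • ∏ j ∈ Finset.range l, (Polynomial.X - Polynomial.C (j : ℚ))

lemma Cpoly_eval (l : ℕ) (t : ℚ) : (Cpoly l).eval t = Ring.choose t l := by
  have hl : (l.factorial : ℚ) ≠ 0 := Nat.cast_ne_zero.mpr (Nat.factorial_ne_zero l)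
  rw [Cpoly, Polynomial.eval_smul, Polynomial.eval_prod]
  have h : ∏ j ∈ Finset.range l, ((Polynomial.X - Polynomial.C (j:ℚ)).eval t)
      = ∏ j ∈ Finset.range l, (t - (j:ℚ)) :=
    Finset.prod_congr rfl fun j _ => by simp
  rw [h, ← fact_mul_choose_eq_prod, smul_eq_mul, ← mul_assoc, inv_mul_cancel₀ hl, one_mul]

lemma upow_mem_matset {n : ℕ} (U : Subgroup (GL (Fin n) ℚ))
    (hclosed : matClosure (subgroupMatSet U) = subgroupMatSet U)
    (y : GL (Fin n) ℚ) (hy : y ∈ U)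
    (hN : ((y : Matrix (Fin n) (Fin n) ℚ) - 1) ^ n = 0) (hn : 0 < n) (t : ℚ) :
    upow ((y : Matrix (Fin n) (Fin n) ℚ) - 1) t ∈ subgroupMatSet U := by
  set N : Matrix (Fin n) (Fin n) ℚ := (y : Matrix (Fin n) (Fin n) ℚ) - 1 with hNdef
  set g : Fin n × Fin n → Polynomial ℚ :=
    fun s => ∑ l ∈ Finset.range n, Polynomial.C ((N ^ l) s.1 s.2) * Cpoly l with hg
  have hgev : ∀ u : ℚ, (fun s => (g s).eval u) = matFun (upow N u) := by
    intro u
    funext s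
    rw [hg]
    simp only [Polynomial.eval_finset_sum, Polynomial.eval_mul, Polynomial.eval_C, Cpoly_eval]
    show _ = upow N u s.1 s.2
    rw [upow_apply, Matrix.sum_apply]
    refine Finset.sum_congr rfl fun l _ => ?_
    rw [Matrix.smul_apply, smul_eq_mul, mul_comm]
  rw [← hclosed, matClosure]
  letI tβ : TopologicalSpace (Fin n × Fin n → ℚ) := zariskiTop (Fin n × Fin n) ℚ
  letI : TopologicalSpace (Matrix (Fin n) (Fin n) ℚ) := zariskiMat n ℚ
  rw [mem_closure_iff]
  intro O hO hmem
  obtain ⟨O', hO', rfl⟩ := isOpen_induced_iff.mp hO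
  have hmem' : (fun s => (g s).eval t) ∈ O' := by rw [hgev t]; exact hmem
  obtain ⟨F, hF⟩ := zar_dense g O' hO' t hmem'
  obtain ⟨m, hm⟩ : ∃ m : ℕ, ((m : ℚ)) ∉ (F : Set ℚ) := by
    by_contra hcon
    push_neg at hcon
    have hsub : Set.range ((↑) : ℕ → ℚ) ⊆ (F : Set ℚ) := by
      rintro _ ⟨m, rfl⟩; exact hcon m
    exact Set.infinite_range_of_injective Nat.cast_injective (F.finite_toSet.subset hsub)
  refine ⟨((y ^ m : GL (Fin n) ℚ) : Matrix (Fin n) (Fin n) ℚ), ?_, ⟨y ^ m, pow_mem hy m, rfl⟩⟩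
  show matFun ((y ^ m : GL (Fin n) ℚ) : Matrix (Fin n) (Fin n) ℚ) ∈ O'
  have hcoe : ((y ^ m : GL (Fin n) ℚ) : Matrix (Fin n) (Fin n) ℚ) = upow N (m : ℚ) := by
    rw [upow_natCast N hN hn m, Units.val_pow_eq_pow_val]
    congr 1
    rw [hNdef]
    abel
  rw [hcoe, ← hgev (m : ℚ)]
  exact hF _ hm

/-- let `S` be a nonempty finite set of primes, `U` a unipotent
algebraic group over `ℚ` (a Zariski-closed group of unipotent matrices in
`GL n ℚ`), `Λ = U(ℤ[1/S])` its group of `S`-integral points, and `Γ ≤ U` a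
subgroup commensurable with `Λ`.  Then every homomorphism `Γ → ℤ` is trivial. -/
theorem stmt18 (S : Finset ℕ) (hS : ∀ q ∈ S, q.Prime) (hSne : S.Nonempty)
    (n : ℕ) (U Λ Γ : Subgroup (GL (Fin n) ℚ))
    (hunip : ∀ g ∈ U, ((g : Matrix (Fin n) (Fin n) ℚ) - 1) ^ n = 0)
    (hclosed : matClosure (subgroupMatSet U) = subgroupMatSet U)
    (hΛ : ∀ g : GL (Fin n) ℚ, g ∈ Λ ↔ g ∈ U ∧
      (∀ i j, (g : Matrix (Fin n) (Fin n) ℚ) i j ∈ sIntegers S) ∧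
      (∀ i j, ((g⁻¹ : GL (Fin n) ℚ) : Matrix (Fin n) (Fin n) ℚ) i j ∈ sIntegers S))
    (hΓU : Γ ≤ U) (hcomm : Subgroup.Commensurable Γ Λ) :
    ∀ f : Γ →* Multiplicative ℤ, ∀ x : Γ, f x = 1 := by
  intro f x
  rcases Nat.eq_zero_or_pos n with hn0 | hn
  · subst hn0
    have hmat : ∀ A B : Matrix (Fin 0) (Fin 0) ℚ, A = B := fun A B => by
      ext i j
      exact i.elim0
    have hx1 : x = 1 := Subtype.ext (Units.ext (hmat _ _))
    rw [hx1, _root_.map_one]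
  obtain ⟨q, hqS⟩ := hSne
  have hq : q.Prime := hS q hqS
  have hq0 : (q : ℚ) ≠ 0 := Nat.cast_ne_zero.mpr hq.ne_zero
  suffices hmain : ∀ y : Γ, (y : GL (Fin n) ℚ) ∈ Λ → f y = 1 by
    obtain ⟨d, hd0, _, hdmem⟩ :=
      Subgroup.exists_pow_mem_of_relIndex_ne_zero hcomm.2 x.2
    have hxd : ((x ^ d : Γ) : GL (Fin n) ℚ) = (x : GL (Fin n) ℚ) ^ d :=
      SubmonoidClass.coe_pow x d
    have h1 : f (x ^ d) = 1 := hmain (x ^ d) (by rw [hxd]; exact hdmem.1)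
    rw [map_pow] at h1
    have h2 := congrArg Multiplicative.toAdd h1
    rw [toAdd_pow, toAdd_one] at h2
    have h3 : Multiplicative.toAdd (f x) = 0 := by
      rcases smul_eq_zero.mp h2 with h | h
      · omega
      · exact h
    have := congrArg Multiplicative.ofAdd h3
    simpa using this
  intro y hyΛ
  set Y : GL (Fin n) ℚ := (y : GL (Fin n) ℚ) with hY
  have hyU : Y ∈ U := hΓU y.2
  set N : Matrix (Fin n) (Fin n) ℚ := (Y : Matrix (Fin n) (Fin n) ℚ) - 1 with hNdef
  have hN : N ^ n = 0 := hunip Y hyU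
  set b : ℤ := Multiplicative.toAdd (f y) with hb
  by_contra hfy
  have hbne : b ≠ 0 := by
    intro h0
    apply hfy
    have := congrArg Multiplicative.ofAdd (hb.symm.trans h0)
    simpa using this
  set M : ℕ := Γ.relIndex Λ with hM
  have hMne : M ≠ 0 := hcomm.1
  set k : ℕ := M * b.natAbs + 1 with hk
  have hklt : M * b.natAbs < q ^ k := by
    calc M * b.natAbs < k := by omega
    _ < q ^ k := Nat.lt_pow_self hq.one_lt
  -- the q^k-th root of y
  set t : ℚ := (1 : ℚ) / (q : ℚ) ^ k with htdef
  have hw1 : upow N t * upow N (-t) = 1 := by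
    rw [upow_add N hN, add_neg_cancel, upow_zero N hn]
  have hw2 : upow N (-t) * upow N t = 1 := by
    rw [upow_add N hN, neg_add_cancel, upow_zero N hn]
  set w : GL (Fin n) ℚ := ⟨upow N t, upow N (-t), hw1, hw2⟩ with hw
  have hwU : w ∈ U := by
    obtain ⟨g, hgU, hgval⟩ := upow_mem_matset U hclosed Y hyU hN hn t
    have : g = w := Units.ext (by simpa using hgval)
    exact this ▸ hgU
  have hNmem : ∀ i j, N i j ∈ sIntegers S := by
    intro i j
    rw [hNdef]
    have hYmem := ((hΛ Y).mp hyΛ).2.1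
    have h1mem : (1 : Matrix (Fin n) (Fin n) ℚ) i j ∈ sIntegers S := by
      rw [Matrix.one_apply]
      split <;> simp [Subring.one_mem, Subring.zero_mem]
    exact sub_mem (hYmem i j) h1mem
  have hwΛ : w ∈ Λ := by
    rw [hΛ]
    refine ⟨hwU, ?_, ?_⟩
    · intro i j
      have : (w : Matrix (Fin n) (Fin n) ℚ) = upow N (((1:ℤ) : ℚ) / (q:ℚ)^k) := by
        push_cast
        rfl
      rw [this]
      exact upow_entries_mem S hqS hq N hNmem 1 k i j
    · intro i j
      have : ((w⁻¹ : GL (Fin n) ℚ) : Matrix (Fin n) (Fin n) ℚ) =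
          upow N (((-1:ℤ) : ℚ) / (q:ℚ)^k) := by
        show upow N (-t) = _
        rw [htdef]
        push_cast
        ring_nf
      rw [this]
      exact upow_entries_mem S hqS hq N hNmem (-1) k i j
  obtain ⟨m, hm0, hmle, hmmem⟩ :=
    Subgroup.exists_pow_mem_of_relIndex_ne_zero hMne hwΛ
  set z : Γ := ⟨w ^ m, hmmem.1⟩ with hz
  have hzpow : z ^ (q ^ k) = y ^ m := by
    apply Subtype.ext
    show (w ^ m) ^ (q ^ k) = Y ^ m
    apply Units.ext
    show ((w ^ m) ^ (q ^ k) : GL (Fin n) ℚ).val = ((Y ^ m : GL (Fin n) ℚ)).val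
    rw [Units.val_pow_eq_pow_val, Units.val_pow_eq_pow_val, Units.val_pow_eq_pow_val]
    show ((upow N t) ^ m) ^ (q ^ k) = (Y : Matrix (Fin n) (Fin n) ℚ) ^ m
    rw [← pow_mul, upow_pow N hN hn, mul_comm m (q ^ k)]
    have he : ((q ^ k * m : ℕ) : ℚ) * t = (m : ℚ) := by
      rw [htdef]
      push_cast
      field_simp
    rw [he, upow_natCast N hN hn m]
    congr 1
    rw [hNdef]
    abel
  have hfz := congrArg f hzpow
  rw [map_pow, map_pow] at hfz
  have hfz' := congrArg Multiplicative.toAdd hfz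
  rw [toAdd_pow, toAdd_pow] at hfz'
  -- hfz' : (q^k) • toAdd (f z) = m • b
  have hdvd : ((q : ℤ)) ^ k ∣ (m : ℤ) * b := by
    refine ⟨Multiplicative.toAdd (f z), ?_⟩
    have : ((q ^ k : ℕ) : ℤ) * Multiplicative.toAdd (f z) = (m : ℤ) * b := by
      rw [← nsmul_eq_mul, ← nsmul_eq_mul]
      exact_mod_cast hfz'
    rw [← this]
    push_cast
    ring
  have habs : ((m : ℤ) * b).natAbs < q ^ k := by
    have h1 : ((m : ℤ) * b).natAbs = m * b.natAbs := by
      rw [Int.natAbs_mul, Int.natAbs_natCast]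
    rw [h1]
    calc m * b.natAbs ≤ M * b.natAbs := Nat.mul_le_mul_right _ hmle
    _ < q ^ k := hklt
  have hne : (m : ℤ) * b ≠ 0 := by
    apply mul_ne_zero
    · exact_mod_cast hm0.ne'
    · exact hbne
  have hdvd' : (q : ℕ) ^ k ∣ ((m : ℤ) * b).natAbs := by
    have : ((q : ℤ)) ^ k = ((q ^ k : ℕ) : ℤ) := by push_cast; ring
    rw [this] at hdvd
    exact Int.ofNat_dvd.mp (Int.dvd_natAbs.mpr hdvd)
  have := Nat.le_of_dvd (Nat.pos_of_ne_zero (fun h => hne (Int.natAbs_eq_zero.mp h))) hdvd'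
  omega
end
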